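/- Let E be an elliptic curve without complex multiplication over a field k of characteristic 0, and let C, C' ⊆ E be k-rational cyclic subgroups of order d. If the quotient elliptic curves E/C and E/C' are isomorphic over k, then C = C'. -/

import Mathlib

/-- The `n`-torsion subgroup of an abelian group. -/
def nTorsion (n : ℕ) (A : Type) [AddCommGroup A] : AddSubgroup A where
  carrier := {x | n • x = 0}
  zero_mem' := by simp
  add_mem' := by
    intro a b ha hb
    simp only [Set.mem_setOf_eq] at *
    rw [smul_add, ha, hb, add_zero]
  neg_mem' := by
    intro a ha
    simp only [Set.mem_setOf_eq] at *
    rw [smul_neg, ha, neg_zero]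

lemma mem_nTorsion {A : Type} [AddCommGroup A] (n : ℕ) (x : A) :
    x ∈ nTorsion n A ↔ n • x = 0 := Iff.rfl

lemma card_ker_smul {A B : Type} [AddCommGroup A] [AddCommGroup B] (f : A →+ B)
    (hf : Function.Surjective f) (m : ℕ) :
    Nat.card (m • f).ker = Nat.card (nTorsion m B) * Nat.card f.ker := by
  set K := (m • f).ker with hK
  have hmem : ∀ x : A, x ∈ K ↔ m • f x = 0 := by
    intro x
    rw [hK, AddMonoidHom.mem_ker, AddMonoidHom.smul_apply]
  let g : K →+ nTorsion m B :=
    AddMonoidHom.codRestrict (f.comp K.subtype) (nTorsion m B)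
      (fun x => (hmem x.1).mp x.2)
  have hgsurj : Function.Surjective g := by
    rintro ⟨b, hb⟩
    obtain ⟨a, ha⟩ := hf b
    refine ⟨⟨a, (hmem a).mpr (by rw [ha]; exact hb)⟩, ?_⟩
    exact Subtype.ext ha
  have e1 : (K ⧸ g.ker) ≃+ nTorsion m B :=
    QuotientAddGroup.quotientKerEquivOfSurjective g hgsurj
  have e2 : g.ker ≃ f.ker := by
    refine ⟨fun x => ⟨x.1.1, ?_⟩, fun y => ⟨⟨y.1, (hmem y.1).mpr (by rw [y.2, smul_zero])⟩, ?_⟩, ?_, ?_⟩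
    · have hx : g x.1 = 0 := x.2
      show f _ = 0
      exact Subtype.ext_iff.mp hx
    · exact Subtype.ext (by show f _ = 0; exact y.2)
    · intro x; ext; rfl
    · intro y; ext; rfl
  calc Nat.card K = Nat.card (K ⧸ g.ker) * Nat.card g.ker :=
        AddSubgroup.card_eq_card_quotient_mul_card_addSubgroup g.ker
    _ = Nat.card (nTorsion m B) * Nat.card f.ker := by
        rw [Nat.card_congr e1.toEquiv, Nat.card_congr e2]


/-- Let `E` be an elliptic curve without complex multiplication over a field
`k` of characteristic `0`, and let `C, C' ⊆ E` be `k`-rational cyclic subgroups of order `d`.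
If the quotient elliptic curves `E/C` and `E/C'` are isomorphic over `k`, then `C = C'`.

Since Mathlib has no theory of isogenies, the setting is axiomatized faithfully:
`E`, `Q = E/C` and `Q' = E/C'` are given by their groups of `k̄`-points, acted on by the
absolute Galois group `Γ = Gal(k̄/k)`; predicates `Alg__` single out the group homomorphisms
induced by morphisms of the underlying elliptic curves over `k̄`, and the standard facts about
such morphisms (closure under sums and composition, surjectivity and finiteness of kernels of
nonzero ones, vanishing of those with finite image, existence of dual isogenies, `End(Ē) = ℤ`
since `E` is non-CM, and the structure of torsion) are hypotheses.  `C = ker π` and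
`C' = ker π'` are the kernels of the quotient isogenies, they are cyclic of order `d` and
Galois-stable (`k`-rational), and `ι : E/C ≃ E/C'` is an isomorphism of elliptic curves
defined over `k`.  The conclusion is `C = C'`. -/
theorem kernel_determines_quotient_of_nonCM
    (k : Type) [Field k] [CharZero k]
    (Γ : Type) [Group Γ]
    (E Q Q' : Type) [AddCommGroup E] [AddCommGroup Q] [AddCommGroup Q']
    (ρE : Γ →* Multiplicative (AddAut E)) (ρQ : Γ →* Multiplicative (AddAut Q))
    (ρQ' : Γ →* Multiplicative (AddAut Q'))
    (AlgEE : (E →+ E) → Prop) (AlgEQ : (E →+ Q) → Prop) (AlgEQ' : (E →+ Q') → Prop)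
    (AlgQE : (Q →+ E) → Prop) (AlgQQ' : (Q →+ Q') → Prop) (AlgQ'Q : (Q' →+ Q) → Prop)
    -- closure properties of algebraic maps
    (halg_sub : ∀ f g : E →+ Q, AlgEQ f → AlgEQ g → AlgEQ (f - g))
    (halg_add : ∀ f g : E →+ Q, AlgEQ f → AlgEQ g → AlgEQ (f + g))
    (halg_compEQ'Q : ∀ (f : E →+ Q') (g : Q' →+ Q), AlgEQ' f → AlgQ'Q g → AlgEQ (g.comp f))
    (halg_compEQE : ∀ (f : E →+ Q) (g : Q →+ E), AlgEQ f → AlgQE g → AlgEE (g.comp f))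
    -- a nonzero algebraic map of elliptic curves over `k̄` is an isogeny
    (halg_isog : ∀ f : E →+ Q, AlgEQ f → f ≠ 0 → Function.Surjective f ∧ Finite f.ker)
    -- an algebraic map with finite image is zero
    (halg_fin : ∀ f : E →+ Q, AlgEQ f → (Set.range f).Finite → f = 0)
    -- existence of dual isogenies
    (halg_dual : ∀ f : E →+ Q, AlgEQ f → f ≠ 0 →
      ∃ fd : Q →+ E, AlgQE fd ∧ fd.comp f = Nat.card f.ker • AddMonoidHom.id E ∧
        f.comp fd = Nat.card f.ker • AddMonoidHom.id Q)
    -- `E` has no complex multiplication: `End(Ē) = ℤ`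
    (hnonCM : ∀ f : E →+ E, AlgEE f → ∃ z : ℤ, f = z • AddMonoidHom.id E)
    -- torsion and divisibility of elliptic curves over `k̄` (char 0)
    (htorsE : ∀ m : ℕ, 0 < m → Nat.card (nTorsion m E) = m ^ 2)
    (htorsQ : ∀ m : ℕ, 0 < m → Nat.card (nTorsion m Q) = m ^ 2)
    (hdivE : ∀ m : ℕ, 0 < m → Function.Surjective fun x : E => m • x)
    (hdivQ : ∀ m : ℕ, 0 < m → Function.Surjective fun x : Q => m • x)
    -- the quotient isogenies `π : E → E/C` and `π' : E → E/C'`, defined over `k`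
    (π : E →+ Q) (π' : E →+ Q')
    (hπalg : AlgEQ π) (hπ'alg : AlgEQ' π')
    (hπsurj : Function.Surjective π) (hπ'surj : Function.Surjective π')
    (hπgal : ∀ (σ : Γ) (x : E), π (ρE σ x) = ρQ σ (π x))
    (hπ'gal : ∀ (σ : Γ) (x : E), π' (ρE σ x) = ρQ' σ (π' x))
    -- `C = ker π` and `C' = ker π'` are `k`-rational cyclic subgroups of order `d`
    (d : ℕ) (hd : 0 < d)
    (hCcyc : IsAddCyclic π.ker) (hC'cyc : IsAddCyclic π'.ker)
    (hCcard : Nat.card π.ker = d) (hC'card : Nat.card π'.ker = d)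
    (hCgal : ∀ σ : Γ, ∀ x ∈ π.ker, ρE σ x ∈ π.ker)
    (hC'gal : ∀ σ : Γ, ∀ x ∈ π'.ker, ρE σ x ∈ π'.ker)
    -- an isomorphism of elliptic curves `E/C ≅ E/C'` over `k`
    (ι : Q ≃+ Q')
    (hιalg : AlgQQ' ι.toAddMonoidHom) (hιsymmalg : AlgQ'Q ι.symm.toAddMonoidHom)
    (hιgal : ∀ (σ : Γ) (x : Q), ι (ρQ σ x) = ρQ' σ (ι x)) :
    π.ker = π'.ker := by
  -- the map ψ = ι⁻¹ ∘ π' : E → Q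
  set ψ : E →+ Q := ι.symm.toAddMonoidHom.comp π' with hψdef
  have hψapp : ∀ x : E, ψ x = ι.symm (π' x) := fun x => rfl
  have hψalg : AlgEQ ψ := halg_compEQ'Q π' ι.symm.toAddMonoidHom hπ'alg hιsymmalg
  have hψsurj : Function.Surjective ψ :=
    Function.Surjective.comp (g := ι.symm) ι.symm.surjective hπ'surj
  have hψker : ψ.ker = π'.ker := by
    ext x
    simp only [AddMonoidHom.mem_ker, hψapp]
    constructor
    · intro h
      have := congrArg ι h
      simpa using this
    · intro h; rw [h]; simp
  have hψcard : Nat.card ψ.ker = d := by rw [hψker]; exact hC'card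
  -- a group where `m`-multiplication kills everything contradicts the torsion count
  have hkill : ∀ m : ℕ, 0 < m → ¬ (∀ q : Q, m • q = 0) := by
    intro m hm hall
    have h1 : nTorsion m Q = nTorsion (2 * m) Q := by
      ext x
      simp [mem_nTorsion, hall x, mul_smul, hall]
    have h2 := htorsQ m hm
    have h3 := htorsQ (2 * m) (by omega)
    rw [h1, h3] at h2
    nlinarith
  -- π is nonzero
  have hπne : π ≠ 0 := by
    intro h
    refine hkill 1 one_pos (fun q => ?_)
    obtain ⟨x, hx⟩ := hπsurj q
    rw [h] at hx
    simp only [AddMonoidHom.zero_apply] at hx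
    rw [← hx, smul_zero]
  -- dual isogeny of π
  obtain ⟨πd, hπdalg, hdl, hdr⟩ := halg_dual π hπalg hπne
  rw [hCcard] at hdl hdr
  -- the endomorphism πd ∘ ψ is multiplication by some z
  obtain ⟨z, hz⟩ := hnonCM (πd.comp ψ) (halg_compEQE ψ πd hψalg hπdalg)
  -- key relation : d • ψ = z • π
  have key : ∀ x : E, d • ψ x = z • π x := by
    intro x
    have h1 : πd (ψ x) = z • x := by
      have := DFunLike.congr_fun hz x
      simpa using this
    have h2 := DFunLike.congr_fun hdr (ψ x)
    simp only [AddMonoidHom.comp_apply, AddMonoidHom.smul_apply, AddMonoidHom.id_apply] at h2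
    rw [h1] at h2
    rw [← h2, map_zsmul]
  -- z is nonzero
  have hz0 : z ≠ 0 := by
    rintro rfl
    refine hkill d hd (fun q => ?_)
    obtain ⟨x, hx⟩ := hψsurj q
    rw [← hx]
    have := key x
    simpa using this
  set n := z.natAbs with hn
  have hnpos : 0 < n := Int.natAbs_pos.mpr hz0
  -- kernel equality : ker (d • ψ) = ker (n • π)
  have hkereq : (d • ψ).ker = (n • π).ker := by
    ext x
    simp only [AddMonoidHom.mem_ker, AddMonoidHom.smul_apply]
    rw [key x]
    rcases Int.natAbs_eq z with h | h
    · rw [← hn] at h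
      rw [h, natCast_zsmul]
    · rw [← hn] at h
      rw [h, neg_smul, neg_eq_zero, natCast_zsmul]
  -- cardinality computation : d^2 * d = n^2 * d, hence n = d
  have hc1 := card_ker_smul ψ hψsurj d
  have hc2 := card_ker_smul π hπsurj n
  rw [hkereq, hc2, hψcard, hCcard, htorsQ d hd, htorsQ n hnpos] at hc1
  have hnd : n = d := by
    have h2 : n ^ 2 = d ^ 2 := Nat.eq_of_mul_eq_mul_right hd hc1
    exact Nat.pow_left_injective (by norm_num) h2
  -- hence z = d or z = -d
  have hzcases : z = (d : ℤ) ∨ z = -(d : ℤ) := by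
    rcases Int.natAbs_eq z with h | h
    · left; rw [h, ← hn, hnd]
    · right; rw [h, ← hn, hnd]
  -- finiteness of the d-torsion of Q
  have hfin : Finite (nTorsion d Q) :=
    Nat.finite_of_card_ne_zero (by rw [htorsQ d hd]; positivity)
  have hfinset : ((nTorsion d Q : AddSubgroup Q) : Set Q).Finite := Set.toFinite _
  -- conclude ψ = ± π
  have hkerψπ : ψ.ker = π.ker := by
    rcases hzcases with h | h
    · -- ψ - π has finite image, hence vanishes
      have hu : ∀ x : E, d • (ψ - π) x = 0 := by
        intro x
        simp only [AddMonoidHom.sub_apply, smul_sub]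
        rw [key x, h, natCast_zsmul, sub_self]
      have hrange : Set.range (ψ - π) ⊆ (nTorsion d Q : Set Q) := by
        rintro q ⟨x, rfl⟩
        exact (mem_nTorsion d _).mpr (hu x)
      have h0 : ψ - π = 0 := halg_fin _ (halg_sub ψ π hψalg hπalg)
        (Set.Finite.subset hfinset hrange)
      have : ψ = π := sub_eq_zero.mp h0
      rw [this]
    · have hu : ∀ x : E, d • (ψ + π) x = 0 := by
        intro x
        simp only [AddMonoidHom.add_apply, smul_add]
        rw [key x, h, neg_smul, natCast_zsmul, neg_add_cancel]
      have hrange : Set.range (ψ + π) ⊆ (nTorsion d Q : Set Q) := by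
        rintro q ⟨x, rfl⟩
        exact (mem_nTorsion d _).mpr (hu x)
      have h0 : ψ + π = 0 := halg_fin _ (halg_add ψ π hψalg hπalg)
        (Set.Finite.subset hfinset hrange)
      have hψπ : ∀ x, ψ x = -π x := by
        intro x
        have := DFunLike.congr_fun h0 x
        simp only [AddMonoidHom.add_apply, AddMonoidHom.zero_apply] at this
        exact eq_neg_of_add_eq_zero_left this
      ext x
      simp only [AddMonoidHom.mem_ker, hψπ x, neg_eq_zero]
  rw [← hψker, hkerψπ]
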